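/- Let N ≥ 3, let a ∈ C²(ℝ) with a(s) ≥ ν > 0 for all s ∈ ℝ, let p > 1 and m > 0, let g be the solution of g'(s) = 1/√(a(g(s))), g(0) = 0, and let h(t) = (|g(t)|^{p−1} g(t) − m g(t))/√(a(g(t))). If v ∈ C²(ℝ^N) satisfies v > 0 in ℝ^N and −Δv(x) = h(v(x)) for all x ∈ ℝ^N, then u := g ∘ v belongs to C²(ℝ^N), u > 0 in ℝ^N, and u is a classical solution of −a(u)Δu − (1/2)a'(u)|∇u|² + m u = u^p in ℝ^N. -/

import Mathlib

open Filter Real Topology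

/-- The Laplacian of `u : ℝ^N → ℝ`, as the sum of second partial derivatives. -/
noncomputable def lap {N : ℕ} (u : EuclideanSpace ℝ (Fin N) → ℝ)
    (x : EuclideanSpace ℝ (Fin N)) : ℝ :=
  ∑ i : Fin N, fderiv ℝ (fun y => fderiv ℝ u y (EuclideanSpace.single i 1)) x
    (EuclideanSpace.single i 1)

private lemma norm_sq_eq_sum' {N : ℕ} (w : EuclideanSpace ℝ (Fin N)) :
    ‖w‖ ^ 2 = ∑ i, (w i) ^ 2 := by
  rw [EuclideanSpace.norm_eq, Real.sq_sqrt (by positivity)]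
  simp [sq_abs]

private lemma gradient_apply' {N : ℕ} (f : EuclideanSpace ℝ (Fin N) → ℝ)
    (x : EuclideanSpace ℝ (Fin N)) (i : Fin N) :
    gradient f x i = fderiv ℝ f x (EuclideanSpace.single i 1) := by
  have : (inner ℝ (gradient f x) (EuclideanSpace.single i (1:ℝ)) : ℝ)
      = fderiv ℝ f x (EuclideanSpace.single i 1) := by
    rw [gradient, InnerProductSpace.toDual_symm_apply]
  rw [EuclideanSpace.inner_single_right] at this
  simpa using this

theorem dual_solution_yields_solution
    (N : ℕ) (hN : 3 ≤ N)
    (a : ℝ → ℝ) (ν : ℝ) (hν : 0 < ν)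
    (ha : ContDiff ℝ 2 a) (hbound : ∀ s, ν ≤ a s)
    (p m : ℝ) (hp : 1 < p) (hm : 0 < m)
    (g : ℝ → ℝ)
    (hg : ∀ s, HasDerivAt g (1 / Real.sqrt (a (g s))) s) (hg0 : g 0 = 0)
    (h : ℝ → ℝ)
    (hh : ∀ t, h t = (|g t| ^ (p - 1) * g t - m * g t) / Real.sqrt (a (g t)))
    (v : EuclideanSpace ℝ (Fin N) → ℝ) (hv : ContDiff ℝ 2 v)
    (hvpos : ∀ x, 0 < v x)
    (hveq : ∀ x, -lap v x = h (v x)) :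
    ContDiff ℝ 2 (g ∘ v) ∧ (∀ x, 0 < (g ∘ v) x) ∧
    (∀ x, -(a ((g ∘ v) x) * lap (g ∘ v) x)
        - (1 / 2) * deriv a ((g ∘ v) x) * ‖gradient (g ∘ v) x‖ ^ 2
        + m * (g ∘ v) x = (g ∘ v) x ^ p) := by
  set φ : ℝ → ℝ := fun t => (Real.sqrt (a (g t)))⁻¹ with hφdef
  have hapos : ∀ t : ℝ, 0 < a t := fun t => lt_of_lt_of_le hν (hbound t)
  have hrpos : ∀ t : ℝ, 0 < Real.sqrt (a (g t)) := fun t => Real.sqrt_pos.mpr (hapos _)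
  have hg' : ∀ s, HasDerivAt g (φ s) s := by
    intro s; simpa [hφdef, one_div] using hg s
  have hgd : Differentiable ℝ g := fun s => (hg' s).differentiableAt
  have hderiv : deriv g = φ := funext fun s => (hg' s).deriv
  have hgc : Continuous g := hgd.continuous
  have hgC1 : ContDiff ℝ 1 g := by
    rw [contDiff_one_iff_deriv, hderiv]
    exact ⟨hgd, (Real.continuous_sqrt.comp ((ha.continuous).comp hgc)).inv₀
      fun t => (hrpos t).ne'⟩
  have hφC1 : ContDiff ℝ 1 φ := by
    rw [contDiff_iff_contDiffAt]
    intro t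
    exact ((Real.contDiffAt_sqrt (hapos (g t)).ne').comp t
      ((ha.of_le one_le_two).contDiffAt.comp t hgC1.contDiffAt)).inv (hrpos t).ne'
  have hgC2 : ContDiff ℝ 2 g := by
    rw [show (2 : WithTop ℕ∞) = 1 + 1 from rfl, contDiff_succ_iff_deriv, hderiv]
    exact ⟨hgd, by simp, hφC1⟩
  have hφ' : ∀ s, HasDerivAt φ (-(1/2) * deriv a (g s) * (φ s)^4) s := by
    intro s
    have had : HasDerivAt a (deriv a (g s)) (g s) :=
      ((ha.differentiable two_ne_zero) (g s)).hasDerivAt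
    have h1 : HasDerivAt (fun t => a (g t)) (deriv a (g s) * φ s) s := had.comp s (hg' s)
    have h2 : HasDerivAt (fun t => Real.sqrt (a (g t)))
        (1 / (2 * Real.sqrt (a (g s))) * (deriv a (g s) * φ s)) s :=
      (Real.hasDerivAt_sqrt (hapos (g s)).ne').comp s h1
    have h3 := h2.inv (hrpos s).ne'
    convert h3 using 1
    have hr := (hrpos s).ne'
    · rfl
    · rfl
    · rfl
    · simp only [hφdef]
      field_simp
  -- positivity of g ∘ v
  have hgmono : StrictMono g := by
    apply strictMono_of_deriv_pos
    intro s; rw [hderiv]; exact inv_pos.mpr (hrpos s)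
  have hupos : ∀ x, 0 < (g ∘ v) x := by
    intro x
    have := hgmono (hvpos x)
    rwa [hg0] at this
  have huC2 : ContDiff ℝ 2 (g ∘ v) := hgC2.comp hv
  refine ⟨huC2, hupos, fun x => ?_⟩
  -- first derivative of u = g ∘ v
  have hvd : Differentiable ℝ v := hv.differentiable two_ne_zero
  have hu' : ∀ y, HasFDerivAt (g ∘ v) (φ (v y) • fderiv ℝ v y) y := fun y =>
    (hg' (v y)).comp_hasFDerivAt y (hvd y).hasFDerivAt
  have hfdu : ∀ y, fderiv ℝ (g ∘ v) y = φ (v y) • fderiv ℝ v y := fun y => (hu' y).fderiv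
  -- second derivatives
  have hfv : ContDiff ℝ 1 (fderiv ℝ v) := hv.fderiv_right (le_refl _)
  set e : Fin N → EuclideanSpace ℝ (Fin N) := fun i => EuclideanSpace.single i 1 with he
  have hFi : ∀ i, Differentiable ℝ (fun y => fderiv ℝ v y (e i)) := fun i =>
    (hfv.clm_apply contDiff_const).differentiable one_ne_zero
  have hsecond : ∀ i, fderiv ℝ (fun y => fderiv ℝ (g ∘ v) y (e i)) x (e i)
      = φ (v x) * fderiv ℝ (fun y => fderiv ℝ v y (e i)) x (e i)
        + -(1/2) * deriv a (g (v x)) * (φ (v x))^4 * (fderiv ℝ v x (e i))^2 := by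
    intro i
    have hφv : HasFDerivAt (fun y => φ (v y))
        ((-(1/2) * deriv a (g (v x)) * (φ (v x))^4) • fderiv ℝ v x) x :=
      (hφ' (v x)).comp_hasFDerivAt x (hvd x).hasFDerivAt
    have hprod : HasFDerivAt (fun y => φ (v y) * fderiv ℝ v y (e i))
        (φ (v x) • fderiv ℝ (fun y => fderiv ℝ v y (e i)) x
          + fderiv ℝ v x (e i) • ((-(1/2) * deriv a (g (v x)) * (φ (v x))^4) • fderiv ℝ v x)) x :=
      hφv.mul ((hFi i) x).hasFDerivAt
    have heq : (fun y => fderiv ℝ (g ∘ v) y (e i)) = fun y => φ (v y) * fderiv ℝ v y (e i) := by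
      funext y; rw [hfdu y]; simp
    rw [heq, hprod.fderiv]
    simp [ContinuousLinearMap.add_apply, ContinuousLinearMap.smul_apply]
    ring
  have hlap : lap (g ∘ v) x = φ (v x) * lap v x
      + -(1/2) * deriv a (g (v x)) * (φ (v x))^4 * ∑ i, (fderiv ℝ v x (e i))^2 := by
    unfold lap
    rw [show ∀ w, (∑ i : Fin N, fderiv ℝ (fun y => fderiv ℝ (g ∘ v) y
      (EuclideanSpace.single i 1)) x (EuclideanSpace.single i 1)) = w ↔ _ from fun w => Iff.rfl]
    calc (∑ i : Fin N, fderiv ℝ (fun y => fderiv ℝ (g ∘ v) y (e i)) x (e i))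
        = ∑ i : Fin N, (φ (v x) * fderiv ℝ (fun y => fderiv ℝ v y (e i)) x (e i)
          + -(1/2) * deriv a (g (v x)) * (φ (v x))^4 * (fderiv ℝ v x (e i))^2) := by
          exact Finset.sum_congr rfl fun i _ => hsecond i
      _ = _ := by
          rw [Finset.sum_add_distrib, ← Finset.mul_sum, ← Finset.mul_sum]
  have hgradu : ‖gradient (g ∘ v) x‖ ^ 2 = (φ (v x))^2 * ∑ i, (fderiv ℝ v x (e i))^2 := by
    rw [norm_sq_eq_sum']
    rw [Finset.mul_sum]
    refine Finset.sum_congr rfl fun i _ => ?_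
    rw [gradient_apply', hfdu x]
    simp [he]
    ring
  -- final algebra
  set G := g (v x) with hG
  set r := Real.sqrt (a G) with hr
  have hrpos' : 0 < r := hrpos (v x)
  have hr2 : r ^ 2 = a G := Real.sq_sqrt (hapos G).le
  have hGpos : 0 < G := hupos x
  have hLv : -lap v x = (|G| ^ (p-1) * G - m * G) / r := by rw [hveq x, hh (v x)]
  have habs : |G| = G := abs_of_pos hGpos
  have hpow : G ^ (p - 1) * G = G ^ p := by
    nth_rewrite 2 [← Real.rpow_one G]
    rw [← Real.rpow_add hGpos]
    ring_nf
  have hlapv : lap v x = -((G ^ p - m * G) / r) := by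
    have h2 : |G| ^ (p - 1) * G = G ^ p := by rw [habs, hpow]
    rw [← h2]; linarith [hLv]
  show -(a G * lap (g ∘ v) x) - (1/2) * deriv a G * ‖gradient (g ∘ v) x‖ ^ 2 + m * G = G ^ p
  rw [hlap, hgradu, hlapv]
  have hφx : φ (v x) = r⁻¹ := rfl
  rw [hφx]
  have hrne : r ≠ 0 := hrpos'.ne'
  rw [← hr2]
  field_simp
  ring
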